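/- arXiv:0910.1795 — 2 statements merged into one kernel-verified Lean document; each statement's English description precedes it below -/
import Mathlib

section
/- For every complex number a with Im(a) > 0, ∫_{-∞}^{∞} e^{-t²}/(t - a) dt = iπ·e^{-a²}·erfc(-ia), where erfc(z) = (2/√π)·∫_z^∞ e^{-t²} dt (the integral taken along any path from z to +∞ eventually along the real axis). -/
open Complex MeasureTheory
open Set Filter Topology

-- norm of cexp(-(u+c)^2)
lemma norm_cexp_neg_sq (c : ℂ) (u : ℝ) :
    ‖Complex.exp (-((u:ℂ)+c)^2)‖ = Real.exp (c.im^2 - (u+c.re)^2) := by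
  rw [Complex.norm_exp]
  congr 1
  simp [pow_two, Complex.mul_re]


-- tendsto 0 at top
lemma tendsto_cexp_neg_sq (c : ℂ) :
    Tendsto (fun u : ℝ => Complex.exp (-((u:ℂ)+c)^2)) atTop (𝓝 0) := by
  rw [tendsto_zero_iff_norm_tendsto_zero]
  simp only [norm_cexp_neg_sq]
  apply Real.tendsto_exp_atBot.comp
  have h1 : Tendsto (fun u : ℝ => (u + c.re)^2) atTop atTop :=
    (tendsto_pow_atTop two_ne_zero).comp (tendsto_atTop_add_const_right _ _ tendsto_id)
  have := tendsto_neg_atTop_atBot.comp h1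
  simpa [Function.comp, sub_eq_add_neg] using tendsto_atBot_add_const_left _ (c.im^2) this

-- integrable gaussian (complex-shifted)
lemma integrable_cexp_neg_sq_shift (c : ℂ) :
    Integrable (fun u : ℝ => Complex.exp (-((u:ℂ)+c)^2)) := by
  have hg : Integrable (fun u : ℝ => Real.exp (c.im^2) * Real.exp (-(u+c.re)^2)) := by
    have : Integrable (fun v : ℝ => Real.exp (-v^2)) := by
      simpa using integrable_exp_neg_mul_sq (one_pos)
    exact (this.comp_add_right c.re).const_mul _
  refine hg.mono' ?_ (Eventually.of_forall fun u => ?_)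
  · apply Continuous.aestronglyMeasurable; fun_prop
  · rw [norm_cexp_neg_sq, sub_eq_add_neg, Real.exp_add]

lemma integrable_mul_cexp_neg_sq_shift (c : ℂ) :
    Integrable (fun u : ℝ => ((u:ℂ)+c) * Complex.exp (-((u:ℂ)+c)^2)) := by
  have habs : Integrable (fun v : ℝ => |v| * Real.exp (-v^2)) := by
    have := integrable_rpow_mul_exp_neg_mul_sq one_pos (s := 1) (by norm_num)
    have h2 := this.abs
    simp only [Real.rpow_one, neg_mul, one_mul, abs_mul, Real.abs_exp] at h2
    exact h2
  have hg : Integrable (fun u : ℝ =>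
      Real.exp (c.im^2) * ((|u + c.re| + (|c.re| + ‖c‖)) * Real.exp (-(u+c.re)^2))) := by
    refine Integrable.const_mul ?_ _
    have : Integrable (fun v : ℝ => (|v| + (|c.re| + ‖c‖)) * Real.exp (-v^2)) := by
      have h2 : Integrable (fun v : ℝ => Real.exp (-v^2)) := by
        simpa using integrable_exp_neg_mul_sq (one_pos)
      simpa [add_mul, Pi.add_def] using habs.add (h2.const_mul (|c.re| + ‖c‖))
    exact this.comp_add_right c.re
  refine hg.mono' ?_ (Eventually.of_forall fun u => ?_)
  · apply Continuous.aestronglyMeasurable; fun_prop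
  · rw [norm_mul, norm_cexp_neg_sq]
    have h1 : ‖(u:ℂ)+c‖ ≤ |u + c.re| + (|c.re| + ‖c‖) := by
      calc ‖(u:ℂ)+c‖ ≤ ‖(u:ℂ)‖ + ‖c‖ := norm_add_le _ _
        _ = |u| + ‖c‖ := by simp
        _ ≤ |u + c.re| + |c.re| + ‖c‖ := by
            have := abs_sub_abs_le_abs_sub (u + c.re) c.re
            have h := abs_add_le (u + c.re) (-c.re)
            simp only [add_neg_cancel_right, abs_neg] at h
            linarith [h]
        _ = |u + c.re| + (|c.re| + ‖c‖) := by ring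
    rw [sub_eq_add_neg, Real.exp_add]
    have he : Real.exp (-(u + c.re)^2) = Real.exp (-((u+c.re)^2)) := by norm_num
    calc ‖(u:ℂ)+c‖ * (Real.exp (c.im^2) * Real.exp (-(u + c.re) ^ 2))
        ≤ (|u + c.re| + (|c.re| + ‖c‖)) * (Real.exp (c.im^2) * Real.exp (-(u + c.re) ^ 2)) := by
          apply mul_le_mul_of_nonneg_right h1 (by positivity)
      _ = Real.exp (c.im^2) * ((|u + c.re| + (|c.re| + ‖c‖)) * Real.exp (-(u+c.re)^2)) := by ring

lemma hasDerivAt_linear (w c : ℂ) (t : ℝ) :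
    HasDerivAt (fun t : ℝ => w + (t:ℂ)*c) c t := by
  have h0 : HasDerivAt (fun t : ℝ => (t:ℂ)) 1 t := by
    simpa using (hasDerivAt_id t).ofReal_comp
  simpa using (h0.mul_const c).const_add w

lemma hasDerivAt_cexp_shift (c : ℂ) (u : ℝ) :
    HasDerivAt (fun u : ℝ => Complex.exp (-((u:ℂ)+c)^2))
      (-2*((u:ℂ)+c) * Complex.exp (-((u:ℂ)+c)^2)) u := by
  have h1 : HasDerivAt (fun u : ℝ => ((u:ℂ)+c)) 1 u := by
    simpa [add_comm] using hasDerivAt_linear c 1 u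
  have h2 := (((h1.mul h1).neg).cexp)
  simp only [← pow_two] at h2
  simp only [Pi.neg_apply, Pi.pow_apply] at h2
  convert h2 using 1
  ring

-- FTC on Ioi: ∫_{Ioi 0} (u+c) e^{-(u+c)^2} du has closed form is not needed directly;
-- we need: ∫ u in Ioi 0, ((u:ℂ)+c) * cexp (-((u:ℂ)+c)^2) = cexp (-c^2) / 2
lemma integral_Ioi_mul_cexp (c : ℂ) :
    ∫ u in Ioi (0:ℝ), ((u:ℂ)+c) * Complex.exp (-((u:ℂ)+c)^2) = Complex.exp (-c^2) / 2 := by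
  have := integral_Ioi_of_hasDerivAt_of_tendsto' (a := 0)
    (f := fun u : ℝ => (-1/2 : ℂ) * Complex.exp (-((u:ℂ)+c)^2))
    (f' := fun u : ℝ => ((u:ℂ)+c) * Complex.exp (-((u:ℂ)+c)^2))
    (m := 0) ?_ ?_ ?_
  · rw [this]; simp; ring
  · intro u _
    have := ((hasDerivAt_cexp_shift c u).const_mul (-1/2 : ℂ))
    exact this.congr_deriv (by ring)
  · exact (integrable_mul_cexp_neg_sq_shift c).integrableOn
  · simpa using ((tendsto_cexp_neg_sq c).const_mul (-1/2 : ℂ))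

lemma integrable_real_shift (M : ℝ) :
    Integrable (fun u : ℝ => (u + M) * Real.exp (-(u - M)^2)) := by
  have h1 : Integrable (fun x : ℝ => x * Real.exp (-x^2)) := by
    have := integrable_rpow_mul_exp_neg_mul_sq one_pos (s := 1) (by norm_num)
    simpa [Real.rpow_one] using this
  have h2 : Integrable (fun v : ℝ => Real.exp (-v^2)) := by
    simpa using integrable_exp_neg_mul_sq (one_pos)
  have base : Integrable (fun v : ℝ => (v + 2*M) * Real.exp (-v^2)) := by
    simpa [add_mul, Pi.add_def] using h1.add (h2.const_mul (2*M))
  exact (base.comp_sub_right M).congr (ae_of_all _ fun u => by ring_nf)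

lemma key_contour (c : ℂ) :
    ∫ u in Ioi (0:ℝ), Complex.exp (-((u:ℂ)+c)^2)
      = (Real.sqrt Real.pi / 2 : ℝ) - ∫ t in (0:ℝ)..1, c * Complex.exp (-((t:ℂ)*c)^2) := by
  set M := ‖c‖ with hM
  have hMre : |c.re| ≤ M := Complex.abs_re_le_norm c
  have hMim : |c.im| ≤ M := Complex.abs_im_le_norm c
  have hM0 : 0 ≤ M := norm_nonneg c
  -- step a: pointwise FTC in t
  have hsub : ∀ u : ℝ, Complex.exp (-(u:ℂ)^2) - Complex.exp (-((u:ℂ)+c)^2)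
      = ∫ t in (0:ℝ)..1, (2*c*((u:ℂ)+(t:ℂ)*c)) * Complex.exp (-((u:ℂ)+(t:ℂ)*c)^2) := by
    intro u
    have hd : ∀ t ∈ uIcc (0:ℝ) 1,
        HasDerivAt (fun t : ℝ => -Complex.exp (-((u:ℂ)+(t:ℂ)*c)^2))
          ((2*c*((u:ℂ)+(t:ℂ)*c)) * Complex.exp (-((u:ℂ)+(t:ℂ)*c)^2)) t := by
      intro t _
      have h1 := hasDerivAt_linear (u:ℂ) c t
      have h2 := (((h1.mul h1).neg).cexp).neg
      simp only [← pow_two] at h2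
      simp only [Pi.neg_apply, Pi.pow_apply] at h2
      exact h2.congr_deriv (by ring)
    have hint : IntervalIntegrable
        (fun t : ℝ => (2*c*((u:ℂ)+(t:ℂ)*c)) * Complex.exp (-((u:ℂ)+(t:ℂ)*c)^2))
        volume 0 1 := by
      apply Continuous.intervalIntegrable
      fun_prop
    have := intervalIntegral.integral_eq_sub_of_hasDerivAt hd hint
    rw [this]
    push_cast
    ring_nf
  -- the gaussian on the half-line
  have h0 : ∫ u in Ioi (0:ℝ), Complex.exp (-(u:ℂ)^2) = ((Real.sqrt Real.pi / 2 : ℝ) : ℂ) := by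
    have : ∀ u : ℝ, Complex.exp (-(u:ℂ)^2) = ((Real.exp (-u^2) : ℝ) : ℂ) := by
      intro u; push_cast; ring_nf
    simp_rw [this]
    have hre : ∫ u in Ioi (0:ℝ), Real.exp (-u^2) = Real.sqrt Real.pi/2 := by
      simpa using integral_gaussian_Ioi 1
    rw [← hre]
    exact integral_ofReal
  -- integrabilities
  have hi0 : Integrable (fun u : ℝ => Complex.exp (-(u:ℂ)^2)) := by
    simpa using integrable_cexp_neg_sq_shift 0
  have hic : Integrable (fun u : ℝ => Complex.exp (-((u:ℂ)+c)^2)) :=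
    integrable_cexp_neg_sq_shift c
  -- Fubini integrability
  have hprodint : Integrable
      (fun p : ℝ × ℝ => (2*c*((p.1:ℂ)+(p.2:ℂ)*c)) * Complex.exp (-((p.1:ℂ)+(p.2:ℂ)*c)^2))
      ((volume.restrict (Ioi (0:ℝ))).prod (volume.restrict (Ioc (0:ℝ) 1))) := by
    have hb1 : Integrable (fun u : ℝ =>
        (2*M*Real.exp (c.im^2 + M^2)) * ((u + M) * Real.exp (-(u - M)^2)))
        (volume.restrict (Ioi (0:ℝ))) := ((integrable_real_shift M).const_mul _).restrict
    have hb2 : Integrable (fun _ : ℝ => (1:ℝ)) (volume.restrict (Ioc (0:ℝ) 1)) := by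
      rw [← IntegrableOn]
      exact integrableOn_const measure_Ioc_lt_top.ne
    refine (hb1.mul_prod hb2).mono' ?_ ?_
    · apply Continuous.aestronglyMeasurable
      fun_prop
    · rw [Measure.prod_restrict, ae_restrict_iff' (measurableSet_Ioi.prod measurableSet_Ioc)]
      refine Eventually.of_forall ?_
      rintro ⟨u, t⟩ hp
      simp only [Set.mem_prod, Set.mem_Ioi, Set.mem_Ioc] at hp
      have hu := hp.1
      have ht0 := hp.2.1
      have ht1 := hp.2.2
      have hcre := abs_le.1 hMre
      have hcim := abs_le.1 hMim
      have h1 : ‖2*c*((u:ℂ)+(t:ℂ)*c)‖ ≤ 2*M*(u+M) := by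
        rw [norm_mul]
        have e2 : ‖(2*c : ℂ)‖ = 2*M := by
          simp [map_mul, hM]
        rw [e2]
        have e3 : ‖(u:ℂ)+(t:ℂ)*c‖ ≤ u + M := by
          refine (norm_add_le _ _).trans ?_
          have : ‖((t:ℂ)*c)‖ = |t| * M := by
            simp [map_mul, hM]
          rw [this]
          have : ‖((u:ℂ))‖ = |u| := by simp
          rw [this, abs_of_pos hu, abs_of_pos ht0]
          nlinarith
        exact mul_le_mul_of_nonneg_left e3 (by positivity)
      have h2 : ‖Complex.exp (-((u:ℂ)+(t:ℂ)*c)^2)‖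
          ≤ Real.exp (c.im^2 + M^2) * Real.exp (-(u-M)^2) := by
        rw [norm_cexp_neg_sq ((t:ℂ)*c) u, ← Real.exp_add]
        apply Real.exp_le_exp.2
        have hre : ((t:ℂ)*c).re = t * c.re := by simp
        have him : ((t:ℂ)*c).im = t * c.im := by simp
        rw [hre, him]
        have ht2 : t^2 ≤ 1 := by nlinarith
        have f1 : 0 ≤ (1 - t^2) * c.im^2 := mul_nonneg (by linarith) (sq_nonneg c.im)
        have f2 : 0 ≤ M + t*c.re := by nlinarith [hcre.1, mul_le_mul_of_nonneg_left hcre.1 ht0.le]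
        nlinarith [mul_nonneg hu.le f2, sq_nonneg (t*c.re)]
      calc ‖(2*c*((u:ℂ)+(t:ℂ)*c)) * Complex.exp (-((u:ℂ)+(t:ℂ)*c)^2)‖
          = ‖2*c*((u:ℂ)+(t:ℂ)*c)‖ * ‖Complex.exp (-((u:ℂ)+(t:ℂ)*c)^2)‖ := norm_mul _ _
        _ ≤ (2*M*(u+M)) * (Real.exp (c.im^2 + M^2) * Real.exp (-(u-M)^2)) := by
            apply mul_le_mul h1 h2 (norm_nonneg _) (by positivity)
        _ = (2*M*Real.exp (c.im^2 + M^2)) * ((u + M) * Real.exp (-(u - M)^2)) * 1 := by ring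
  -- swap the integrals
  have hfub := integral_integral_swap (μ := volume.restrict (Ioi (0:ℝ)))
    (ν := volume.restrict (Ioc (0:ℝ) 1))
    (f := fun u t => (2*c*((u:ℂ)+(t:ℂ)*c)) * Complex.exp (-((u:ℂ)+(t:ℂ)*c)^2)) (by
      rw [Function.uncurry_def]; exact hprodint)
  -- inner integral after swap
  have hinner : ∀ t : ℝ, ∫ u in Ioi (0:ℝ),
      (2*c*((u:ℂ)+(t:ℂ)*c)) * Complex.exp (-((u:ℂ)+(t:ℂ)*c)^2)
        = c * Complex.exp (-((t:ℂ)*c)^2) := by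
    intro t
    have : ∀ u : ℝ, (2*c*((u:ℂ)+(t:ℂ)*c)) * Complex.exp (-((u:ℂ)+(t:ℂ)*c)^2)
        = (2*c) * (((u:ℂ)+(t:ℂ)*c) * Complex.exp (-((u:ℂ)+(t:ℂ)*c)^2)) := by
      intro u; ring
    simp_rw [this]
    rw [integral_const_mul, integral_Ioi_mul_cexp ((t:ℂ)*c)]
    ring
  -- assemble
  have hdiff : ∫ u in Ioi (0:ℝ), (Complex.exp (-(u:ℂ)^2) - Complex.exp (-((u:ℂ)+c)^2))
      = ∫ t in (0:ℝ)..1, c * Complex.exp (-((t:ℂ)*c)^2) := by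
    rw [intervalIntegral.integral_of_le (by norm_num : (0:ℝ) ≤ 1)]
    calc ∫ u in Ioi (0:ℝ), (Complex.exp (-(u:ℂ)^2) - Complex.exp (-((u:ℂ)+c)^2))
        = ∫ u in Ioi (0:ℝ), (∫ t in Ioc (0:ℝ) 1,
            (2*c*((u:ℂ)+(t:ℂ)*c)) * Complex.exp (-((u:ℂ)+(t:ℂ)*c)^2)) := by
          refine integral_congr_ae (Eventually.of_forall fun u => ?_)
          dsimp only
          rw [hsub u, intervalIntegral.integral_of_le (by norm_num : (0:ℝ) ≤ 1)]
      _ = ∫ t in Ioc (0:ℝ) 1, (∫ u in Ioi (0:ℝ),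
            (2*c*((u:ℂ)+(t:ℂ)*c)) * Complex.exp (-((u:ℂ)+(t:ℂ)*c)^2)) := hfub
      _ = ∫ t in Ioc (0:ℝ) 1, c * Complex.exp (-((t:ℂ)*c)^2) := by
          refine integral_congr_ae (Eventually.of_forall fun t => ?_)
          dsimp only
          exact hinner t
  have hsplit : ∫ u in Ioi (0:ℝ), (Complex.exp (-(u:ℂ)^2) - Complex.exp (-((u:ℂ)+c)^2))
      = (∫ u in Ioi (0:ℝ), Complex.exp (-(u:ℂ)^2))
        - ∫ u in Ioi (0:ℝ), Complex.exp (-((u:ℂ)+c)^2) :=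
    integral_sub hi0.restrict hic.restrict
  rw [hsplit, h0] at hdiff
  rw [← hdiff]
  ring

lemma integrableOn_cexp_mul_Ioi (c : ℂ) (hc : c.re < 0) :
    IntegrableOn (fun s : ℝ => Complex.exp (c * s)) (Ioi (0:ℝ)) := by
  refine ((exp_neg_integrableOn_Ioi 0 (b := -c.re) (by linarith)).mono' ?_ ?_)
  · apply Continuous.aestronglyMeasurable
    fun_prop
  · refine Eventually.of_forall fun s => ?_
    rw [Complex.norm_exp]
    simp [Complex.mul_re]

lemma integral_cexp_mul_Ioi (c : ℂ) (hc : c.re < 0) :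
    ∫ s in Ioi (0:ℝ), Complex.exp (c * (s:ℂ)) = -(1/c) := by
  have hc0 : c ≠ 0 := fun h => by simp [h] at hc
  have := integral_Ioi_of_hasDerivAt_of_tendsto' (a := 0)
    (f := fun s : ℝ => Complex.exp (c * (s:ℂ)) / c)
    (f' := fun s : ℝ => Complex.exp (c * (s:ℂ))) (m := 0) ?_ ?_ ?_
  · rw [this]; simp
  · intro s _
    have h0 : HasDerivAt (fun s : ℝ => c * (s:ℂ)) c s := by
      simpa [mul_comm] using hasDerivAt_linear 0 c s
    have := (h0.cexp).div_const c
    exact this.congr_deriv (by field_simp)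
  · exact integrableOn_cexp_mul_Ioi c hc
  · rw [tendsto_zero_iff_norm_tendsto_zero]
    have : ∀ s : ℝ, ‖Complex.exp (c * (s:ℂ)) / c‖ = Real.exp (c.re * s) / ‖c‖ := by
      intro s
      rw [norm_div, Complex.norm_exp]
      congr 2
      simp [Complex.mul_re]
    simp_rw [this]
    rw [show (0:ℝ) = 0 / ‖c‖ by simp]
    apply Tendsto.div_const
    apply Real.tendsto_exp_atBot.comp
    exact Tendsto.const_mul_atTop_of_neg hc tendsto_id

/-- The complementary error function, `erfc z = 1 - (2/√π)∫_0^z e^{-w²} dw`,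
with the path integral from `0` to `z` parametrized along the segment. -/
noncomputable def erfc (z : ℂ) : ℂ :=
  1 - (2 / Real.sqrt Real.pi : ℝ) *
    ∫ t in (0 : ℝ)..1, z * Complex.exp (-((t : ℂ) * z) ^ 2)

/-- For `Im a > 0`, `∫_ℝ e^{-t²}/(t - a) dt = iπ e^{-a²} erfc(-ia)`. -/
theorem integral_gaussian_pole (a : ℂ) (ha : 0 < a.im) :
    (∫ t : ℝ, Complex.exp (-(t : ℂ) ^ 2) / ((t : ℂ) - a)) =
      Complex.I * Real.pi * Complex.exp (-a ^ 2) * erfc (-Complex.I * a) := by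
  -- Step 1: 1/(t-a) as a half-line exponential integral
  have E1 : ∀ t : ℝ, Complex.exp (-(t:ℂ)^2) / ((t:ℂ) - a)
      = ∫ s in Ioi (0:ℝ), Complex.I *
          Complex.exp (-(t:ℂ)^2 + (Complex.I*(a - (t:ℂ)))*(s:ℂ)) := by
    intro t
    have hccre : (Complex.I*(a - (t:ℂ))).re < 0 := by
      simp [Complex.mul_re]
      linarith
    have hta : (t:ℂ) - a ≠ 0 := by
      intro h
      have : ((t:ℂ) - a).im = 0 := by rw [h]; simp
      simp at this
      linarith
    symm
    calc (∫ s in Ioi (0:ℝ), Complex.I *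
          Complex.exp (-(t:ℂ)^2 + (Complex.I*(a - (t:ℂ)))*(s:ℂ)))
        = ∫ s in Ioi (0:ℝ), (Complex.I * Complex.exp (-(t:ℂ)^2)) *
            Complex.exp ((Complex.I*(a - (t:ℂ)))*(s:ℂ)) := by
          refine integral_congr_ae (Eventually.of_forall fun s => ?_)
          dsimp only
          rw [Complex.exp_add]; ring
      _ = (Complex.I * Complex.exp (-(t:ℂ)^2)) *
            ∫ s in Ioi (0:ℝ), Complex.exp ((Complex.I*(a - (t:ℂ)))*(s:ℂ)) :=
          integral_const_mul _ _
      _ = (Complex.I * Complex.exp (-(t:ℂ)^2)) * (-(1/(Complex.I*(a - (t:ℂ))))) := by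
          rw [integral_cexp_mul_Ioi _ hccre]
      _ = Complex.exp (-(t:ℂ)^2) / ((t:ℂ) - a) := by
          rw [div_eq_mul_inv]
          have h1 : (Complex.I*(a - (t:ℂ))) ≠ 0 := by
            apply mul_ne_zero Complex.I_ne_zero
            intro h
            apply hta
            simp only [sub_eq_zero] at h ⊢
            exact h.symm
          field_simp
          ring_nf
          have h2 : (-(t:ℂ) + a) ≠ 0 := fun h => hta (by linear_combination -h)
          rw [← neg_mul, ← add_mul]
          exact mul_inv_cancel₀ h2
  -- Step 2: Fubini
  have hprodint : Integrable
      (fun p : ℝ × ℝ => Complex.I *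
        Complex.exp (-(p.1:ℂ)^2 + (Complex.I*(a - (p.1:ℂ)))*(p.2:ℂ)))
      (volume.prod (volume.restrict (Ioi (0:ℝ)))) := by
    have hb1 : Integrable (fun t : ℝ => Real.exp (-t^2)) := by
      simpa using integrable_exp_neg_mul_sq (one_pos)
    have hb2 : Integrable (fun s : ℝ => Real.exp (-a.im * s))
        (volume.restrict (Ioi (0:ℝ))) := exp_neg_integrableOn_Ioi 0 ha
    refine (hb1.mul_prod hb2).mono' ?_ ?_
    · apply Continuous.aestronglyMeasurable
      fun_prop
    · refine Eventually.of_forall fun p => ?_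
      rw [norm_mul, Complex.norm_I, one_mul,
        Complex.norm_exp, ← Real.exp_add]
      apply le_of_eq
      congr 1
      simp [Complex.add_re, Complex.mul_re, Complex.sub_re, Complex.sub_im, ← Complex.ofReal_pow]
  have hswap := integral_integral_swap
    (f := fun (t s : ℝ) => Complex.I *
      Complex.exp (-(t:ℂ)^2 + (Complex.I*(a - (t:ℂ)))*(s:ℂ)))
    (μ := volume) (ν := volume.restrict (Ioi (0:ℝ)))
    (by rw [Function.uncurry_def]; exact hprodint)
  -- Step 3: the inner Gaussian integral
  have E3 : ∀ s : ℝ, (∫ t : ℝ, Complex.I *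
      Complex.exp (-(t:ℂ)^2 + (Complex.I*(a - (t:ℂ)))*(s:ℂ)))
      = Complex.I * ((Real.sqrt Real.pi : ℝ) : ℂ) *
          Complex.exp (Complex.I*(s:ℂ)*a - (s:ℂ)^2/4) := by
    intro s
    have hrw : ∀ t : ℝ, -(t:ℂ)^2 + (Complex.I*(a - (t:ℂ)))*(s:ℂ)
        = (-1)*(t:ℂ)^2 + (-Complex.I*(s:ℂ))*(t:ℂ) + Complex.I*(s:ℂ)*a := by
      intro t; ring
    have hquad := integral_cexp_quadratic (b := -1) (by simp)
      (-Complex.I*(s:ℂ)) (Complex.I*(s:ℂ)*a)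
    calc (∫ t : ℝ, Complex.I *
        Complex.exp (-(t:ℂ)^2 + (Complex.I*(a - (t:ℂ)))*(s:ℂ)))
        = Complex.I * ∫ t : ℝ,
            Complex.exp ((-1)*(t:ℂ)^2 + (-Complex.I*(s:ℂ))*(t:ℂ) + Complex.I*(s:ℂ)*a) := by
          rw [integral_const_mul]
          congr 1
          refine integral_congr_ae (Eventually.of_forall fun t => ?_)
          dsimp only
          rw [hrw t]
      _ = Complex.I * ((Real.pi : ℂ)/(-(-1)))^((1:ℂ)/2) *
            Complex.exp (Complex.I*(s:ℂ)*a - (-Complex.I*(s:ℂ))^2/(4*(-1))) := by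
          rw [hquad]; ring
      _ = Complex.I * ((Real.sqrt Real.pi : ℝ) : ℂ) *
            Complex.exp (Complex.I*(s:ℂ)*a - (s:ℂ)^2/4) := by
          congr 1
          · congr 1
            rw [show ((Real.pi : ℂ)/(-(-1))) = (Real.pi : ℂ) by norm_num]
            rw [show ((1:ℂ)/2) = ((1/2 : ℝ) : ℂ) by norm_num]
            rw [← Complex.ofReal_cpow Real.pi_pos.le, Real.sqrt_eq_rpow]
          · congr 1
            have : (-Complex.I*(s:ℂ))^2 = -(s:ℂ)^2 := by
              ring_nf
              simp [Complex.I_sq]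
            rw [this]
            ring
  -- Step 4/5: complete the square and rescale
  have E45 : ∫ s in Ioi (0:ℝ), Complex.exp (Complex.I*(s:ℂ)*a - (s:ℂ)^2/4)
      = Complex.exp (-a^2) * ((2:ℝ) • ∫ u in Ioi (0:ℝ),
          Complex.exp (-((u:ℂ) + (-Complex.I*a))^2)) := by
    have hpt : ∀ s : ℝ, Complex.exp (Complex.I*(s:ℂ)*a - (s:ℂ)^2/4)
        = Complex.exp (-a^2) *
            Complex.exp (-(((((1:ℝ)/2)*s : ℝ):ℂ) + (-Complex.I*a))^2) := by
      intro s
      rw [← Complex.exp_add]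
      congr 1
      push_cast
      ring_nf
      rw [Complex.I_sq]
      ring
    have hsc := integral_comp_mul_left_Ioi
      (fun u : ℝ => Complex.exp (-((u:ℂ) + (-Complex.I*a))^2)) 0
      (by norm_num : (0:ℝ) < 1/2)
    simp only [mul_zero] at hsc
    calc ∫ s in Ioi (0:ℝ), Complex.exp (Complex.I*(s:ℂ)*a - (s:ℂ)^2/4)
        = ∫ s in Ioi (0:ℝ), Complex.exp (-a^2) *
            Complex.exp (-(((((1:ℝ)/2)*s : ℝ):ℂ) + (-Complex.I*a))^2) :=
          integral_congr_ae (Eventually.of_forall hpt)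
      _ = Complex.exp (-a^2) * ∫ s in Ioi (0:ℝ),
            Complex.exp (-(((((1:ℝ)/2)*s : ℝ):ℂ) + (-Complex.I*a))^2) :=
          integral_const_mul _ _
      _ = Complex.exp (-a^2) * ((2:ℝ) • ∫ u in Ioi (0:ℝ),
            Complex.exp (-((u:ℂ) + (-Complex.I*a))^2)) := by
          rw [hsc]
          norm_num
  -- Step 6
  have E6 := key_contour (-Complex.I*a)
  -- assemble
  have hsp : ((Real.sqrt Real.pi : ℝ):ℂ) * ((Real.sqrt Real.pi : ℝ):ℂ) = ((Real.pi : ℝ):ℂ) := by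
    rw [← Complex.ofReal_mul, Real.mul_self_sqrt Real.pi_pos.le]
  have hsp0 : ((Real.sqrt Real.pi : ℝ):ℂ) ≠ 0 := by
    exact_mod_cast (Real.sqrt_pos.2 Real.pi_pos).ne'
  calc (∫ t : ℝ, Complex.exp (-(t : ℂ) ^ 2) / ((t : ℂ) - a))
      = ∫ t : ℝ, ∫ s in Ioi (0:ℝ), Complex.I *
          Complex.exp (-(t:ℂ)^2 + (Complex.I*(a - (t:ℂ)))*(s:ℂ)) :=
        integral_congr_ae (Eventually.of_forall E1)
    _ = ∫ s in Ioi (0:ℝ), ∫ t : ℝ, Complex.I *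
          Complex.exp (-(t:ℂ)^2 + (Complex.I*(a - (t:ℂ)))*(s:ℂ)) := hswap
    _ = ∫ s in Ioi (0:ℝ), Complex.I * ((Real.sqrt Real.pi : ℝ) : ℂ) *
          Complex.exp (Complex.I*(s:ℂ)*a - (s:ℂ)^2/4) :=
        integral_congr_ae (Eventually.of_forall fun s => E3 s)
    _ = Complex.I * ((Real.sqrt Real.pi : ℝ) : ℂ) *
          ∫ s in Ioi (0:ℝ), Complex.exp (Complex.I*(s:ℂ)*a - (s:ℂ)^2/4) :=
        integral_const_mul _ _
    _ = Complex.I * Real.pi * Complex.exp (-a ^ 2) * erfc (-Complex.I * a) := by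
        rw [E45, E6, erfc]
        rw [Complex.real_smul]
        push_cast
        rw [← hsp]
        field_simp
end

section
/- Let B : ℝ → ℂ be continuous with Taylor-type expansion B(s) = Σ_{k=0}^{2N-1} b_k s^k + R(s) where |R(s)| ≤ C|s|^{2N} for all s ∈ ℝ, and suppose B is bounded. Then for x > 0, ∫_{-∞}^{∞} e^{-xs²} B(s) ds = Σ_{k=0}^{N-1} b_{2k}·Γ((2k+1)/2)·x^{-(2k+1)/2} + E(x) with |E(x)| ≤ C·Γ((2N+1)/2)·x^{-(2N+1)/2}. -/
open MeasureTheory Finset Real Set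

lemma int_pow_gauss {x : ℝ} (hx : 0 < x) (k : ℕ) :
    Integrable (fun s : ℝ => s ^ k * Real.exp (-x * s ^ 2)) := by
  have h := integrable_rpow_mul_exp_neg_mul_sq hx (s := (k : ℝ))
    (by exact_mod_cast lt_of_lt_of_le (by norm_num : (-1:ℝ) < 0) (Nat.cast_nonneg k))
  simpa [Real.rpow_natCast] using h

lemma even_moment {x : ℝ} (hx : 0 < x) (k : ℕ) :
    ∫ s : ℝ, s ^ (2 * k) * Real.exp (-x * s ^ 2)
      = Real.Gamma ((2 * k + 1) / 2) * x ^ (-(2 * (k : ℝ) + 1) / 2) := by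
  have habs : ∀ s : ℝ, |s| ^ (2 * k) * Real.exp (-x * |s| ^ 2)
      = s ^ (2 * k) * Real.exp (-x * s ^ 2) := by
    intro s; rw [pow_mul, sq_abs, ← pow_mul]
  have h2 : (∫ s : ℝ, s ^ (2 * k) * Real.exp (-x * s ^ 2))
      = 2 * ∫ s in Ioi (0:ℝ), s ^ (2 * k) * Real.exp (-x * s ^ 2) := by
    rw [← integral_comp_abs (f := fun s => s ^ (2 * k) * Real.exp (-x * s ^ 2))]
    simp_rw [habs]
  have h3 : (∫ s in Ioi (0:ℝ), s ^ (2 * k) * Real.exp (-x * s ^ 2))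
      = x ^ (-(2 * (k:ℝ) + 1) / 2) * (1 / 2) * Real.Gamma ((2 * (k:ℝ) + 1) / 2) := by
    have := integral_rpow_mul_exp_neg_mul_rpow (p := 2) (q := (2 * k : ℝ))
      (b := x) (by norm_num) (lt_of_lt_of_le (show (-1:ℝ) < 0 by norm_num) (by positivity)) hx
    rw [show ((2:ℝ) * k + 1) = (2 * (k:ℝ)) + 1 by ring]
    rw [← this]
    refine setIntegral_congr_fun measurableSet_Ioi (fun s hs => ?_)
    rw [← Real.rpow_natCast s (2 * k), ← Real.rpow_natCast s 2]
    push_cast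
    ring_nf
  rw [h2, h3]; ring

lemma odd_moment {x : ℝ} (k : ℕ) :
    ∫ s : ℝ, s ^ (2 * k + 1) * Real.exp (-x * s ^ 2) = 0 := by
  have h := MeasureTheory.integral_neg_eq_self
    (fun s : ℝ => s ^ (2 * k + 1) * Real.exp (-x * s ^ 2)) volume
  simp only [neg_sq] at h
  have : ∀ s : ℝ, (-s) ^ (2 * k + 1) * Real.exp (-x * s ^ 2)
      = -(s ^ (2 * k + 1) * Real.exp (-x * s ^ 2)) := by
    intro s; rw [Odd.neg_pow ⟨k, by ring⟩]; ring
  simp_rw [this, integral_neg] at h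
  linarith

lemma sum_range_two_mul_c (f : ℕ → ℂ) (N : ℕ) :
    ∑ k ∈ Finset.range (2 * N), f k = ∑ j ∈ Finset.range N, (f (2 * j) + f (2 * j + 1)) := by
  induction N with
  | zero => simp
  | succ n ih =>
    rw [Finset.sum_range_succ, ← ih, show 2 * (n + 1) = 2 * n + 1 + 1 by ring,
      Finset.sum_range_succ, Finset.sum_range_succ]
    ring

/-- If the bounded continuous function `B` has the Taylor-type expansion
`B(s) = Σ_{k<2N} b_k s^k + R(s)` with `|R(s)| ≤ C|s|^{2N}`, then for `x > 0` the
Gaussian integral of `B` equals `Σ_{k<N} b_{2k} Γ((2k+1)/2) x^{-(2k+1)/2}` up to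
an error of size at most `C Γ((2N+1)/2) x^{-(2N+1)/2}`. -/
theorem gaussian_expansion (B : ℝ → ℂ) (hcont : Continuous B)
    (hbdd : ∃ M : ℝ, ∀ s : ℝ, ‖B s‖ ≤ M)
    (b : ℕ → ℂ) (R : ℝ → ℂ) (N : ℕ) (C : ℝ)
    (hexp : ∀ s : ℝ, B s = (∑ k ∈ Finset.range (2 * N), b k * (s : ℂ) ^ k) + R s)
    (hR : ∀ s : ℝ, ‖R s‖ ≤ C * |s| ^ (2 * N))
    (x : ℝ) (hx : 0 < x) :
    ‖(∫ s : ℝ, Real.exp (-x * s ^ 2) • B s) -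
        ∑ k ∈ Finset.range N,
          b (2 * k) * (Real.Gamma ((2 * k + 1) / 2) : ℂ) *
            ((x ^ (-(2 * (k : ℝ) + 1) / 2) : ℝ) : ℂ)‖ ≤
      C * Real.Gamma ((2 * N + 1) / 2) * x ^ (-(2 * (N : ℝ) + 1) / 2) := by
  obtain ⟨M, hM⟩ := hbdd
  -- integrability facts
  have hintB : Integrable (fun s : ℝ => Real.exp (-x * s ^ 2) • B s) := by
    refine Integrable.mono' ((integrable_exp_neg_mul_sq hx).const_mul M)
      (((Real.continuous_exp.comp (by continuity)).smul hcont).aestronglyMeasurable)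
      (Filter.Eventually.of_forall fun s => ?_)
    rw [norm_smul, Real.norm_eq_abs, abs_of_nonneg (Real.exp_pos _).le, mul_comm M]
    exact mul_le_mul_of_nonneg_left (hM s) (Real.exp_pos _).le
  have hintk : ∀ k : ℕ, Integrable
      (fun s : ℝ => Real.exp (-x * s ^ 2) • (b k * (s : ℂ) ^ k)) := by
    intro k
    have : (fun s : ℝ => Real.exp (-x * s ^ 2) • (b k * (s : ℂ) ^ k))
        = fun s : ℝ => b k * ((s ^ k * Real.exp (-x * s ^ 2) : ℝ) : ℂ) := by
      funext s; push_cast [Complex.real_smul]; ring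
    rw [this]
    exact ((int_pow_gauss hx k).ofReal (𝕜 := ℂ)).const_mul _
  have hintsum : Integrable (fun s : ℝ =>
      Real.exp (-x * s ^ 2) • (∑ k ∈ Finset.range (2 * N), b k * (s : ℂ) ^ k)) := by
    have : (fun s : ℝ =>
        Real.exp (-x * s ^ 2) • (∑ k ∈ Finset.range (2 * N), b k * (s : ℂ) ^ k))
        = fun s : ℝ => ∑ k ∈ Finset.range (2 * N),
            Real.exp (-x * s ^ 2) • (b k * (s : ℂ) ^ k) := by
      funext s; rw [Finset.smul_sum]
    rw [this]
    exact integrable_finset_sum _ fun k _ => hintk k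
  have hintR : Integrable (fun s : ℝ => Real.exp (-x * s ^ 2) • R s) := by
    have : (fun s : ℝ => Real.exp (-x * s ^ 2) • R s)
        = fun s : ℝ => Real.exp (-x * s ^ 2) • B s -
            Real.exp (-x * s ^ 2) • (∑ k ∈ Finset.range (2 * N), b k * (s : ℂ) ^ k) := by
      funext s; rw [hexp s, smul_add]; ring
    rw [this]; exact hintB.sub hintsum
  -- the moment integrals
  have hmom : ∀ k : ℕ, (∫ s : ℝ, Real.exp (-x * s ^ 2) • (b k * (s : ℂ) ^ k))
      = b k * ((∫ s : ℝ, s ^ k * Real.exp (-x * s ^ 2) : ℝ) : ℂ) := by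
    intro k
    have e1 : (fun s : ℝ => Real.exp (-x * s ^ 2) • (b k * (s : ℂ) ^ k))
        = fun s : ℝ => b k * ((s ^ k * Real.exp (-x * s ^ 2) : ℝ) : ℂ) := by
      funext s; push_cast [Complex.real_smul]; ring
    rw [e1, integral_const_mul]
    congr 1
    exact integral_ofReal
  -- main splitting
  have key : (∫ s : ℝ, Real.exp (-x * s ^ 2) • B s)
      = (∑ k ∈ Finset.range N,
          b (2 * k) * (Real.Gamma ((2 * k + 1) / 2) : ℂ) *
            ((x ^ (-(2 * (k : ℝ) + 1) / 2) : ℝ) : ℂ))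
        + ∫ s : ℝ, Real.exp (-x * s ^ 2) • R s := by
    have h1 : (∫ s : ℝ, Real.exp (-x * s ^ 2) • B s)
        = (∫ s : ℝ, Real.exp (-x * s ^ 2) •
              (∑ k ∈ Finset.range (2 * N), b k * (s : ℂ) ^ k))
          + ∫ s : ℝ, Real.exp (-x * s ^ 2) • R s := by
      rw [← integral_add hintsum hintR]
      congr 1; funext s; rw [hexp s, smul_add]
    rw [h1]; congr 1
    have h2 : (∫ s : ℝ, Real.exp (-x * s ^ 2) •
          (∑ k ∈ Finset.range (2 * N), b k * (s : ℂ) ^ k))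
        = ∑ k ∈ Finset.range (2 * N),
            ∫ s : ℝ, Real.exp (-x * s ^ 2) • (b k * (s : ℂ) ^ k) := by
      rw [← integral_finset_sum _ fun k _ => hintk k]
      congr 1; funext s; rw [Finset.smul_sum]
    rw [h2, sum_range_two_mul_c (fun k => ∫ s : ℝ,
      Real.exp (-x * s ^ 2) • (b k * (s : ℂ) ^ k)) N]
    refine Finset.sum_congr rfl fun k _ => ?_
    rw [hmom (2 * k), hmom (2 * k + 1), even_moment hx k, odd_moment (x := x) k]
    push_cast
    ring
  rw [key]
  have hC : 0 ≤ C := le_trans (norm_nonneg (R 1)) (by simpa using hR 1)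
  have hbound : ‖∫ s : ℝ, Real.exp (-x * s ^ 2) • R s‖
      ≤ ∫ s : ℝ, C * (s ^ (2 * N) * Real.exp (-x * s ^ 2)) := by
    refine norm_integral_le_of_norm_le ((int_pow_gauss hx (2 * N)).const_mul C)
      (Filter.Eventually.of_forall fun s => ?_)
    rw [norm_smul, Real.norm_eq_abs, abs_of_nonneg (Real.exp_pos _).le]
    calc Real.exp (-x * s ^ 2) * ‖R s‖
        ≤ Real.exp (-x * s ^ 2) * (C * |s| ^ (2 * N)) :=
          mul_le_mul_of_nonneg_left (hR s) (Real.exp_pos _).le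
      _ = C * (s ^ (2 * N) * Real.exp (-x * s ^ 2)) := by
          rw [pow_mul, sq_abs, ← pow_mul]; ring
  calc ‖(∑ k ∈ Finset.range N, b (2 * k) * (Real.Gamma ((2 * k + 1) / 2) : ℂ) *
            ((x ^ (-(2 * (k : ℝ) + 1) / 2) : ℝ) : ℂ))
        + (∫ s : ℝ, Real.exp (-x * s ^ 2) • R s)
        - ∑ k ∈ Finset.range N, b (2 * k) * (Real.Gamma ((2 * k + 1) / 2) : ℂ) *
            ((x ^ (-(2 * (k : ℝ) + 1) / 2) : ℝ) : ℂ)‖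
      = ‖∫ s : ℝ, Real.exp (-x * s ^ 2) • R s‖ := by rw [add_sub_cancel_left]
    _ ≤ ∫ s : ℝ, C * (s ^ (2 * N) * Real.exp (-x * s ^ 2)) := hbound
    _ = C * Real.Gamma ((2 * N + 1) / 2) * x ^ (-(2 * (N : ℝ) + 1) / 2) := by
        rw [MeasureTheory.integral_const_mul, even_moment hx N]
        ring
end
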